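/- (Convergence of the complex-valued split-sign Hopfield network with Hermitian weights.) Let S = {1+i, 1−i, −1−i, −1+i}, let D = { z ∈ ℂ : Re z ≠ 0 and Im z ≠ 0 }, and for z ∈ D define sgn(z) = sign(Re z) + sign(Im z)·i. Let N ≥ 1 and let (w_ij) be an N×N complex matrix with w_ij = conj(w_ji) for all i, j, and with each diagonal entry w_ii a nonnegative real number. Then for every update schedule σ : ℕ → {1,…,N} and every initial state x(0) ∈ S^N, the asynchronous trajectory defined by x_i(t+1) = sgn(v_i(t)) if i = σ(t) and v_i(t) ∈ D, and x_i(t+1) = x_i(t) otherwise, where v_i(t) = Σⱼ w_ij · x_j(t), is eventually constant: there exists T such that x(t) = x(T) for all t ≥ T. -/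

import Mathlib

noncomputable def hopE {N : ℕ} (w : Fin N → Fin N → ℂ) (y : Fin N → ℂ) : ℝ :=
  -(∑ k, ∑ l, (starRingEnd ℂ) (y k) * w k l * y l).re

lemma sign_term_nonneg (v a : ℝ) (hv : v ≠ 0) (ha : a = 1 ∨ a = -1) :
    0 ≤ (Real.sign v - a) * v := by
  rcases hv.lt_or_gt with h | h <;> rcases ha with rfl | rfl <;>
    simp [Real.sign_of_pos, Real.sign_of_neg, h] <;> nlinarith

lemma sign_term_pos (v a : ℝ) (hv : v ≠ 0) (ha : a = 1 ∨ a = -1)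
    (hne : Real.sign v ≠ a) : 0 < (Real.sign v - a) * v := by
  rcases hv.lt_or_gt with h | h <;> rcases ha with rfl | rfl <;>
    simp_all [Real.sign_of_pos, Real.sign_of_neg, h] <;> nlinarith

lemma quad_diff {N : ℕ} (w : Fin N → Fin N → ℂ) (a : Fin N → ℂ) (i : Fin N) (s : ℂ) :
    (∑ k, ∑ l, (starRingEnd ℂ) (Function.update a i s k) * w k l * Function.update a i s l)
    = (∑ k, ∑ l, (starRingEnd ℂ) (a k) * w k l * a l)
      + (starRingEnd ℂ) (s - a i) * (∑ l, w i l * a l)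
      + (∑ k, (starRingEnd ℂ) (a k) * w k i) * (s - a i)
      + (starRingEnd ℂ) (s - a i) * w i i * (s - a i) := by
  set d := s - a i with hd
  set δ : Fin N → ℂ := fun k => if k = i then d else 0 with hδ
  have hb : ∀ k, Function.update a i s k = a k + δ k := by
    intro k; by_cases h : k = i <;> simp [Function.update, hδ, h, hd]
  have hcδ : ∀ k, (starRingEnd ℂ) (δ k) = if k = i then (starRingEnd ℂ) d else 0 := by
    intro k; by_cases h : k = i <;> simp [hδ, h]
  have expand : ∀ k l, (starRingEnd ℂ) (Function.update a i s k) * w k l * Function.update a i s l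
      = (starRingEnd ℂ) (a k) * w k l * a l + (starRingEnd ℂ) (a k) * w k l * δ l
        + (starRingEnd ℂ) (δ k) * w k l * a l + (starRingEnd ℂ) (δ k) * w k l * δ l := by
    intro k l; simp only [hb, map_add]; ring
  have h2 : (∑ k, ∑ l, (starRingEnd ℂ) (a k) * w k l * δ l)
      = (∑ k, (starRingEnd ℂ) (a k) * w k i) * d := by
    rw [Finset.sum_mul]
    refine Finset.sum_congr rfl fun k _ => ?_
    simp [hδ, mul_ite, mul_zero, Finset.sum_ite_eq', mul_assoc]
  have h3 : (∑ k, ∑ l, (starRingEnd ℂ) (δ k) * w k l * a l)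
      = (starRingEnd ℂ) d * (∑ l, w i l * a l) := by
    rw [Finset.sum_eq_single i]
    · rw [Finset.mul_sum]
      refine Finset.sum_congr rfl fun l _ => by simp [hδ]; ring
    · intro k _ hk; simp [hδ, hk]
    · simp
  have h4 : (∑ k, ∑ l, (starRingEnd ℂ) (δ k) * w k l * δ l)
      = (starRingEnd ℂ) d * w i i * d := by
    simp only [hcδ, ite_mul, zero_mul, Finset.sum_ite_eq', Finset.mem_univ, if_true, hδ,
      mul_ite, mul_zero, apply_ite (starRingEnd ℂ), map_zero]
  calc (∑ k, ∑ l, (starRingEnd ℂ) (Function.update a i s k) * w k l * Function.update a i s l)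
      = ∑ k, ∑ l, ((starRingEnd ℂ) (a k) * w k l * a l + (starRingEnd ℂ) (a k) * w k l * δ l
        + (starRingEnd ℂ) (δ k) * w k l * a l + (starRingEnd ℂ) (δ k) * w k l * δ l) := by
        exact Finset.sum_congr rfl fun k _ => Finset.sum_congr rfl fun l _ => expand k l
    _ = (∑ k, ∑ l, (starRingEnd ℂ) (a k) * w k l * a l)
        + (∑ k, ∑ l, (starRingEnd ℂ) (a k) * w k l * δ l)
        + (∑ k, ∑ l, (starRingEnd ℂ) (δ k) * w k l * a l)
        + (∑ k, ∑ l, (starRingEnd ℂ) (δ k) * w k l * δ l) := by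
        simp [Finset.sum_add_distrib]
    _ = _ := by rw [h2, h3, h4]; ring

lemma step_decrease {N : ℕ} (w : Fin N → Fin N → ℂ)
    (hsym : ∀ i j, w i j = (starRingEnd ℂ) (w j i))
    (i : Fin N) (r : ℝ) (hr : 0 ≤ r) (hwii : w i i = (r : ℂ))
    (a : Fin N → ℂ)
    (hvre : (∑ j, w i j * a j).re ≠ 0) (hvim : (∑ j, w i j * a j).im ≠ 0)
    (hare : (a i).re = 1 ∨ (a i).re = -1) (haim : (a i).im = 1 ∨ (a i).im = -1)
    (hne : (Real.sign (∑ j, w i j * a j).re : ℂ) +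
        (Real.sign (∑ j, w i j * a j).im : ℂ) * Complex.I ≠ a i) :
    hopE w (Function.update a i ((Real.sign (∑ j, w i j * a j).re : ℂ) +
        (Real.sign (∑ j, w i j * a j).im : ℂ) * Complex.I)) < hopE w a := by
  set v := ∑ j, w i j * a j with hv
  set s : ℂ := (Real.sign v.re : ℂ) + (Real.sign v.im : ℂ) * Complex.I with hs
  set d := s - a i with hd
  have hsre : s.re = Real.sign v.re := by simp [hs]
  have hsim : s.im = Real.sign v.im := by simp [hs]
  have hconjv : (∑ k, (starRingEnd ℂ) (a k) * w k i) = (starRingEnd ℂ) v := by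
    rw [hv, map_sum]
    refine Finset.sum_congr rfl fun k _ => ?_
    rw [hsym k i, map_mul]
    ring
  have key := quad_diff w a i s
  rw [hconjv, hwii] at key
  have hmain : 0 < (Real.sign v.re - (a i).re) * v.re + (Real.sign v.im - (a i).im) * v.im := by
    have hne' : Real.sign v.re ≠ (a i).re ∨ Real.sign v.im ≠ (a i).im := by
      by_contra h
      push_neg at h
      exact hne (by rw [Complex.ext_iff]; exact ⟨by rw [hsre, h.1], by rw [hsim, h.2]⟩)
    rcases hne' with h | h
    · have := sign_term_pos v.re (a i).re hvre hare h
      have := sign_term_nonneg v.im (a i).im hvim haim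
      linarith
    · have := sign_term_nonneg v.re (a i).re hvre hare
      have := sign_term_pos v.im (a i).im hvim haim h
      linarith
  have h1 : ((starRingEnd ℂ) d * v).re = d.re * v.re + d.im * v.im := by
    simp [Complex.mul_re]
  have h2 : ((starRingEnd ℂ) v * d).re = d.re * v.re + d.im * v.im := by
    simp [Complex.mul_re]; ring
  have h3 : ((starRingEnd ℂ) d * (r : ℂ) * d).re = r * (d.re ^ 2 + d.im ^ 2) := by
    simp [Complex.mul_re, Complex.mul_im]; ring
  have hdre : d.re = Real.sign v.re - (a i).re := by
    simp [hd, Complex.sub_re, hsre]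
  have hdim : d.im = Real.sign v.im - (a i).im := by
    simp [hd, Complex.sub_im, hsim]
  have hpos : 0 < ((starRingEnd ℂ) d * v + (starRingEnd ℂ) v * d
      + (starRingEnd ℂ) d * (r : ℂ) * d).re := by
    simp only [Complex.add_re, h1, h2, h3]
    have : 0 ≤ r * (d.re ^ 2 + d.im ^ 2) := by positivity
    rw [hdre, hdim] at *
    linarith
  rw [← hv] at key
  unfold hopE
  rw [key]
  simp only [Complex.add_re] at hpos ⊢
  linarith

theorem complex_split_sign_hopfield_convergence
    (N : ℕ) (hN : 1 ≤ N)
    (w : Fin N → Fin N → ℂ)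
    (hsym : ∀ i j, w i j = (starRingEnd ℂ) (w j i))
    (hdiag : ∀ i, ∃ r : ℝ, 0 ≤ r ∧ w i i = (r : ℂ))
    (σ : ℕ → Fin N) (x : ℕ → Fin N → ℂ)
    (hx0 : ∀ i, x 0 i ∈
      ({1 + Complex.I, 1 - Complex.I, -1 - Complex.I, -1 + Complex.I} : Set ℂ))
    (hdyn : ∀ t i,
      ((i = σ t ∧ (∑ j, w i j * x t j).re ≠ 0 ∧ (∑ j, w i j * x t j).im ≠ 0) →
        x (t + 1) i = (Real.sign (∑ j, w i j * x t j).re : ℂ) +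
          (Real.sign (∑ j, w i j * x t j).im : ℂ) * Complex.I) ∧
      (¬(i = σ t ∧ (∑ j, w i j * x t j).re ≠ 0 ∧ (∑ j, w i j * x t j).im ≠ 0) →
        x (t + 1) i = x t i)) :
    ∃ T, ∀ t, T ≤ t → x t = x T := by
  have hsign : ∀ r : ℝ, r ≠ 0 → Real.sign r = 1 ∨ Real.sign r = -1 := by
    intro r h
    rcases h.lt_or_gt with h' | h'
    · exact Or.inr (Real.sign_of_neg h')
    · exact Or.inl (Real.sign_of_pos h')
  -- invariant: components stay in {±1} × {±1}
  have hS : ∀ t i, ((x t i).re = 1 ∨ (x t i).re = -1) ∧ ((x t i).im = 1 ∨ (x t i).im = -1) := by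
    intro t
    induction t with
    | zero =>
      intro i
      rcases hx0 i with h | h | h | h <;> rw [h] <;>
        constructor <;> simp
    | succ t ih =>
      intro i
      by_cases hcond : i = σ t ∧ (∑ j, w i j * x t j).re ≠ 0 ∧ (∑ j, w i j * x t j).im ≠ 0
      · rw [(hdyn t i).1 hcond]
        constructor
        · simpa using hsign _ hcond.2.1
        · simpa using hsign _ hcond.2.2
      · rw [(hdyn t i).2 hcond]; exact ih i
  -- membership of states in the finite set
  set S4 : Set ℂ := {1 + Complex.I, 1 - Complex.I, -1 - Complex.I, -1 + Complex.I} with hS4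
  have hmem : ∀ t i, x t i ∈ S4 := by
    intro t i
    obtain ⟨h1, h2⟩ := hS t i
    simp only [hS4, Set.mem_insert_iff, Set.mem_singleton_iff]
    rcases h1 with h | h <;> rcases h2 with h' | h'
    · exact Or.inl (by apply Complex.ext <;> simp [h, h'])
    · exact Or.inr (Or.inl (by apply Complex.ext <;> simp [h, h']))
    · exact Or.inr (Or.inr (Or.inr (by apply Complex.ext <;> simp [h, h'])))
    · exact Or.inr (Or.inr (Or.inl (by apply Complex.ext <;> simp [h, h'])))
  have hfin : (Set.pi Set.univ fun _ : Fin N => S4).Finite :=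
    Set.Finite.pi fun _ => (((Set.finite_singleton _).insert _).insert _).insert _
  have hXfin : (Set.range x).Finite := by
    refine hfin.subset ?_
    rintro _ ⟨t, rfl⟩
    intro i _
    exact hmem t i
  -- strict energy decrease at each changing step
  have hstep : ∀ t, x (t + 1) = x t ∨ hopE w (x (t + 1)) < hopE w (x t) := by
    intro t
    by_cases hc : (∑ j, w (σ t) j * x t j).re ≠ 0 ∧ (∑ j, w (σ t) j * x t j).im ≠ 0
    · set s : ℂ := (Real.sign (∑ j, w (σ t) j * x t j).re : ℂ) +
        (Real.sign (∑ j, w (σ t) j * x t j).im : ℂ) * Complex.I with hs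
      have hupd : x (t + 1) = Function.update (x t) (σ t) s := by
        funext j
        by_cases hj : j = σ t
        · subst hj
          rw [(hdyn t (σ t)).1 ⟨rfl, hc.1, hc.2⟩]
          simp [Function.update, hs]
        · rw [(hdyn t j).2 (fun h => hj h.1)]
          simp [Function.update, hj]
      by_cases hss : s = x t (σ t)
      · left; rw [hupd, hss, Function.update_eq_self]
      · right
        rw [hupd]
        obtain ⟨r, hr, hwii⟩ := hdiag (σ t)
        exact step_decrease w hsym (σ t) r hr hwii (x t) hc.1 hc.2
          (hS t (σ t)).1 (hS t (σ t)).2 hss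
    · left
      funext j
      refine (hdyn t j).2 ?_
      rintro ⟨rfl, h1, h2⟩
      exact hc ⟨h1, h2⟩
  -- minimal energy along the trajectory
  obtain ⟨b, hbX, hmin⟩ := Set.exists_min_image (Set.range x) (hopE w) hXfin ⟨x 0, ⟨0, rfl⟩⟩
  obtain ⟨T, rfl⟩ := hbX
  refine ⟨T, fun t ht => ?_⟩
  induction t, ht using Nat.le_induction with
  | base => rfl
  | succ t ht ih =>
    rcases hstep t with h | h
    · rw [h, ih]
    · rw [ih] at h
      exact absurd h (not_lt.2 (hmin _ ⟨t + 1, rfl⟩))
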